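/- Every automorphism φ of the free group F₂ such that φ(a) and φ(b) are positive words and φ fixes the commutator exactly, φ(a·b·a⁻¹·b⁻¹) = a·b·a⁻¹·b⁻¹, is a finite composition of copies of T̂₁ and T̂₂ (the identity corresponding to the empty composition). -/

import Mathlib

/-- The free group on two generators. -/
abbrev F2 := FreeGroup (Fin 2)

/-- The first generator `a` of `F₂`. -/
def a : F2 := FreeGroup.of 0

/-- The second generator `b` of `F₂`. -/
def b : F2 := FreeGroup.of 1

/-- The commutator `κ = a·b·a⁻¹·b⁻¹`. -/
def kappa : F2 := a * b * a⁻¹ * b⁻¹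

/-- An element of `F₂` is a positive word if it lies in the submonoid generated by the
generators `a` and `b`. -/
def IsPositiveWord (x : F2) : Prop := x ∈ Submonoid.closure ({a, b} : Set F2)

/-- The endomorphism `T̂₁` of `F₂` determined by `a ↦ a·b`, `b ↦ b`. -/
def T1hat : Monoid.End F2 := FreeGroup.lift fun i => if i = 0 then a * b else b

/-- The endomorphism `T̂₂` of `F₂` determined by `a ↦ a`, `b ↦ b·a`. -/
def T2hat : Monoid.End F2 := FreeGroup.lift fun i => if i = 0 then a else b * a

namespace CommKappaAux

open FreeGroup

/-- The positive word associated to a list of generators. -/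
def mkP (l : List (Fin 2)) : F2 := FreeGroup.mk (l.map fun i => (i, true))

lemma mkP_nil : mkP [] = 1 := rfl

lemma mkP_append (u v : List (Fin 2)) : mkP (u ++ v) = mkP u * mkP v := by
  simp [mkP, FreeGroup.mul_mk]

lemma mkP_zero : mkP [0] = a := rfl

lemma mkP_one : mkP [1] = b := rfl

lemma exists_list (x : F2) (hx : IsPositiveWord x) : ∃ l, mkP l = x := by
  induction hx using Submonoid.closure_induction with
  | mem y hy =>
    rcases hy with h | h
    · exact ⟨[0], by rw [mkP_zero, h]⟩
    · exact ⟨[1], by rw [mkP_one, h]⟩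
  | one => exact ⟨[], rfl⟩
  | mul x y _ _ ihx ihy =>
    obtain ⟨l, hl⟩ := ihx
    obtain ⟨m, hm⟩ := ihy
    exact ⟨l ++ m, by rw [mkP_append, hl, hm]⟩

/-- The endomorphism sending `a` to `mkP u` and `b` to `mkP v`. -/
def rho (u v : List (Fin 2)) : Monoid.End F2 :=
  FreeGroup.lift fun i => if i = 0 then mkP u else mkP v

lemma end_mul_apply (f g : Monoid.End F2) (x : F2) : (f * g) x = f (g x) := rfl

lemma end_map_mul (f : Monoid.End F2) (x y : F2) : f (x * y) = f x * f y := map_mul f x y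

lemma end_map_inv (f : Monoid.End F2) (x : F2) : f x⁻¹ = (f x)⁻¹ := map_inv f x

lemma lift_of_end (f : Fin 2 → F2) (i : Fin 2) :
    (FreeGroup.lift f : Monoid.End F2) (FreeGroup.of i) = f i := FreeGroup.lift_apply_of ..

lemma rho_a (u v : List (Fin 2)) : rho u v a = mkP u := by
  unfold rho a
  refine (lift_of_end _ _).trans ?_
  simp

lemma rho_b (u v : List (Fin 2)) : rho u v b = mkP v := by
  unfold rho b
  refine (lift_of_end _ _).trans ?_
  simp

lemma T1hat_a : T1hat a = a * b := by
  unfold T1hat a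
  refine (lift_of_end _ _).trans ?_
  simp [a]

lemma T1hat_b : T1hat b = b := by
  unfold T1hat b
  refine (lift_of_end _ _).trans ?_
  simp [b]

lemma T2hat_a : T2hat a = a := by
  unfold T2hat a
  refine (lift_of_end _ _).trans ?_
  simp [a]

lemma T2hat_b : T2hat b = b * a := by
  unfold T2hat b
  refine (lift_of_end _ _).trans ?_
  simp [b]

lemma rho_id : rho [0] [1] = 1 := by
  apply FreeGroup.ext_hom
  intro i
  fin_cases i
  · show rho [0] [1] a = a
    rw [rho_a, mkP_zero]
  · show rho [0] [1] b = b
    rw [rho_b, mkP_one]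

lemma rho_T1 (u v : List (Fin 2)) : rho (u ++ v) v = rho u v * T1hat := by
  apply FreeGroup.ext_hom
  intro i
  fin_cases i
  · show rho (u ++ v) v a = (rho u v * T1hat) a
    rw [rho_a, end_mul_apply, T1hat_a, end_map_mul, rho_a, rho_b, mkP_append]
  · show rho (u ++ v) v b = (rho u v * T1hat) b
    rw [rho_b, end_mul_apply, T1hat_b, rho_b]

lemma rho_T2 (u v : List (Fin 2)) : rho u (v ++ u) = rho u v * T2hat := by
  apply FreeGroup.ext_hom
  intro i
  fin_cases i
  · show rho u (v ++ u) a = (rho u v * T2hat) a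
    rw [rho_a, end_mul_apply, T2hat_a, rho_a]
  · show rho u (v ++ u) b = (rho u v * T2hat) b
    rw [rho_b, end_mul_apply, T2hat_b, end_map_mul, rho_a, rho_b, mkP_append]

/-- The non-cancellation relation on letters. -/
def R2 (p q : Fin 2 × Bool) : Prop := ¬(p.1 = q.1 ∧ p.2 = !q.2)

instance : DecidableRel R2 := fun _ _ => instDecidableNot

lemma reduce_eq_self {L : List (Fin 2 × Bool)} (h : List.Chain' R2 L) :
    FreeGroup.reduce L = L := by
  induction L with
  | nil => rfl
  | cons x L ih =>
    rw [FreeGroup.reduce.cons, ih h.tail]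
    cases L with
    | nil => rfl
    | cons y t =>
      have hr : R2 x y := (List.isChain_cons_cons.mp h).1
      show (if x.1 = y.1 ∧ x.2 = !y.2 then t else x :: y :: t) = x :: y :: t
      rw [if_neg hr]

lemma chain'_const (bb : Bool) (l : List (Fin 2)) :
    List.Chain' R2 (l.map fun i => (i, bb)) := by
  induction l with
  | nil => simp [List.Chain']
  | cons c t ih =>
    cases t with
    | nil => simp [List.Chain']
    | cons d t' =>
      refine List.isChain_cons_cons.mpr ⟨?_, ih⟩
      simp [R2]

lemma prefix_split (x : List (Fin 2)) : ∀ (y : List (Fin 2)), ∃ p x₀ y₀,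
    x = p ++ x₀ ∧ y = p ++ y₀ ∧ (x₀ = [] ∨ y₀ = [] ∨ x₀.head? ≠ y₀.head?) := by
  induction x with
  | nil => intro y; exact ⟨[], [], y, rfl, rfl, Or.inl rfl⟩
  | cons c x' ih =>
    intro y
    cases y with
    | nil => exact ⟨[], c :: x', [], rfl, rfl, Or.inr (Or.inl rfl)⟩
    | cons d y' =>
      by_cases hcd : c = d
      · obtain ⟨p, x₀, y₀, h1, h2, h3⟩ := ih y'
        exact ⟨c :: p, x₀, y₀, by simp [h1], by simp [hcd, h2], h3⟩
      · exact ⟨[], c :: x', d :: y', rfl, rfl, Or.inr (Or.inr (by simp [hcd]))⟩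

lemma suffix_split (u v : List (Fin 2)) : ∃ s u₀ v₀,
    u = u₀ ++ s ∧ v = v₀ ++ s ∧ (u₀ = [] ∨ v₀ = [] ∨ u₀.getLast? ≠ v₀.getLast?) := by
  obtain ⟨p, x₀, y₀, h1, h2, h3⟩ := prefix_split u.reverse v.reverse
  refine ⟨p.reverse, x₀.reverse, y₀.reverse, ?_, ?_, ?_⟩
  · rw [← List.reverse_reverse u, h1, List.reverse_append]
  · rw [← List.reverse_reverse v, h2, List.reverse_append]
  · rcases h3 with h | h | h
    · exact Or.inl (by simp [h])
    · exact Or.inr (Or.inl (by simp [h]))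
    · refine Or.inr (Or.inr ?_)
      rwa [List.getLast?_reverse, List.getLast?_reverse]

lemma invRev_map_true (l : List (Fin 2)) :
    FreeGroup.invRev (l.map fun i => (i, true)) = l.reverse.map fun i => (i, false) := by
  simp [FreeGroup.invRev, List.map_map, List.map_reverse]

lemma kappa_toWord : kappa.toWord = [((0 : Fin 2), true), (1, true), (0, false), (1, false)] := by
  decide

lemma kappa_ne_one : kappa ≠ 1 := by decide

/-- The hard case of the dichotomy: both `u₀` and `v₀` nonempty with distinct last
letters forces `u = [0]`, `v = [1]`. -/
lemma hard_case (u₀ v₀ s : List (Fin 2)) (hu₀ : u₀ ≠ []) (hv₀ : v₀ ≠ [])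
    (hlast : u₀.getLast? ≠ v₀.getLast?)
    (h : mkP (u₀ ++ s) * mkP (v₀ ++ s) * (mkP (u₀ ++ s))⁻¹ * (mkP (v₀ ++ s))⁻¹ = kappa) :
    u₀ ++ s = [0] ∧ v₀ ++ s = [1] := by
  obtain ⟨u₁, c, hc⟩ := List.eq_nil_or_concat u₀ |>.resolve_left hu₀
  obtain ⟨v₁, d, hd⟩ := List.eq_nil_or_concat v₀ |>.resolve_left hv₀
  have hc' : u₀ = u₁ ++ [c] := by simpa using hc
  have hd' : v₀ = v₁ ++ [d] := by simpa using hd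
  subst hc'
  subst hd'
  have hcd : c ≠ d := by
    rw [List.getLast?_concat, List.getLast?_concat] at hlast
    intro h'; exact hlast (by rw [h'])
  -- the explicitly reduced word
  set P : List (Fin 2 × Bool) := ((u₁ ++ [c]) ++ s ++ (v₁ ++ [d])).map fun i => (i, true) with hP
  set N : List (Fin 2 × Bool) :=
    FreeGroup.invRev (((v₁ ++ [d]) ++ s ++ (u₁ ++ [c])).map fun i => (i, true)) with hN
  have h1 : FreeGroup.mk P = mkP (u₁ ++ [c]) * mkP s * mkP (v₁ ++ [d]) := by
    show mkP ((u₁ ++ [c]) ++ s ++ (v₁ ++ [d])) = _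
    rw [mkP_append, mkP_append]
  have h2 : FreeGroup.mk N = (mkP (v₁ ++ [d]) * mkP s * mkP (u₁ ++ [c]))⁻¹ := by
    rw [hN, ← FreeGroup.inv_mk]
    congr 1
    show mkP ((v₁ ++ [d]) ++ s ++ (u₁ ++ [c])) = _
    rw [mkP_append, mkP_append]
  have hmk : FreeGroup.mk (P ++ N) = kappa := by
    rw [← FreeGroup.mul_mk, h1, h2, ← h]
    simp only [mkP_append]
    group
  have hNeq : N = ((c :: u₁.reverse) ++ s.reverse ++ (d :: v₁.reverse)).map
      fun i => (i, false) := by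
    rw [hN, invRev_map_true]
    congr 1
    simp [List.reverse_append]
  have hchain : List.Chain' R2 (P ++ N) := by
    rw [List.Chain', List.isChain_append]
    refine ⟨hP ▸ chain'_const true _, hNeq ▸ chain'_const false _, ?_⟩
    intro x hx y hy
    have hPlast : P.getLast? = some (d, true) := by
      have hPsplit : P = (((u₁ ++ [c]) ++ s ++ v₁).map fun i => (i, true)) ++ [(d, true)] := by
        rw [hP]; simp
      rw [hPsplit, List.getLast?_concat]
    have hNhead : N.head? = some (c, false) := by
      rw [hNeq]; rfl
    rw [hPlast] at hx
    rw [hNhead] at hy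
    simp only [Option.mem_def, Option.some.injEq] at hx hy
    subst hx
    subst hy
    intro hcon
    exact hcd hcon.1.symm
  have hW : P ++ N = [((0 : Fin 2), true), (1, true), (0, false), (1, false)] := by
    have hself := reduce_eq_self hchain
    rw [← FreeGroup.toWord_mk, hmk, kappa_toWord] at hself
    exact hself.symm
  -- length analysis
  have hlen : P.length + N.length = 4 := by
    have := congrArg List.length hW
    simpa using this
  have hPlen : P.length = u₁.length + 1 + s.length + (v₁.length + 1) := by
    simp only [hP, List.length_map, List.length_append, List.length_cons, List.length_nil]
  have hNlen : N.length = v₁.length + 1 + s.length + (u₁.length + 1) := by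
    simp only [hNeq, List.length_map, List.length_append, List.length_cons,
      List.length_reverse]
    omega
  have hu₁ : u₁ = [] := List.length_eq_zero_iff.mp (by omega)
  have hv₁ : v₁ = [] := List.length_eq_zero_iff.mp (by omega)
  have hs : s = [] := List.length_eq_zero_iff.mp (by omega)
  subst hu₁
  subst hv₁
  subst hs
  rw [hP, hNeq] at hW
  simp at hW
  obtain ⟨hc0, hd0, -⟩ := hW
  subst hc0
  subst hd0
  exact ⟨rfl, rfl⟩

lemma dichotomy (u v : List (Fin 2))
    (h : mkP u * mkP v * (mkP u)⁻¹ * (mkP v)⁻¹ = kappa) :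
    (u = [0] ∧ v = [1]) ∨ (∃ u', u' ≠ [] ∧ u = u' ++ v) ∨ (∃ v', v' ≠ [] ∧ v = v' ++ u) := by
  obtain ⟨s, u₀, v₀, hu, hv, hcase⟩ := suffix_split u v
  rcases hcase with h0 | h0 | h0
  · subst h0
    simp only [List.nil_append] at hu
    rcases eq_or_ne v₀ [] with h1 | h1
    · subst h1
      simp only [List.nil_append] at hv
      exfalso
      apply kappa_ne_one
      rw [← h, hu, hv]
      group
    · exact Or.inr (Or.inr ⟨v₀, h1, by rw [hv, hu]⟩)
  · subst h0
    simp only [List.nil_append] at hv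
    rcases eq_or_ne u₀ [] with h1 | h1
    · subst h1
      simp only [List.nil_append] at hu
      exfalso
      apply kappa_ne_one
      rw [← h, hu, hv]
      group
    · exact Or.inr (Or.inl ⟨u₀, h1, by rw [hu, hv]⟩)
  · rcases eq_or_ne u₀ [] with h1 | h1
    · subst h1
      simp only [List.nil_append] at hu
      rcases eq_or_ne v₀ [] with h2 | h2
      · subst h2
        simp only [List.nil_append] at hv
        exfalso
        apply kappa_ne_one
        rw [← h, hu, hv]
        group
      · exact Or.inr (Or.inr ⟨v₀, h2, by rw [hv, hu]⟩)
    · rcases eq_or_ne v₀ [] with h2 | h2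
      · subst h2
        simp only [List.nil_append] at hv
        exact Or.inr (Or.inl ⟨u₀, h1, by rw [hu, hv]⟩)
      · subst hu; subst hv
        exact Or.inl (hard_case u₀ v₀ s h1 h2 h0 h)

lemma main : ∀ (n : ℕ) (u v : List (Fin 2)), u.length + v.length ≤ n →
    mkP u * mkP v * (mkP u)⁻¹ * (mkP v)⁻¹ = kappa →
    ∃ L : List (Monoid.End F2), (∀ ψ ∈ L, ψ = T1hat ∨ ψ = T2hat) ∧ L.prod = rho u v := by
  intro n
  induction n with
  | zero =>
    intro u v hn h
    have hu : u = [] := List.length_eq_zero_iff.mp (by omega)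
    have hv : v = [] := List.length_eq_zero_iff.mp (by omega)
    exfalso
    apply kappa_ne_one
    rw [← h, hu, hv, mkP_nil]
    group
  | succ n ih =>
    intro u v hn h
    rcases eq_or_ne u [] with hu0 | hu0
    · exfalso
      apply kappa_ne_one
      rw [← h, hu0, mkP_nil]
      group
    rcases eq_or_ne v [] with hv0 | hv0
    · exfalso
      apply kappa_ne_one
      rw [← h, hv0, mkP_nil]
      group
    rcases dichotomy u v h with ⟨hu, hv⟩ | ⟨u', hne, hu⟩ | ⟨v', hne, hv⟩
    · subst hu; subst hv
      exact ⟨[], by simp, by rw [List.prod_nil, rho_id]⟩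
    · subst hu
      have h' : mkP u' * mkP v * (mkP u')⁻¹ * (mkP v)⁻¹ = kappa := by
        rw [← h, mkP_append]; group
      have hlv : 1 ≤ v.length := List.length_pos_iff.mpr hv0
      obtain ⟨L, hL, hprod⟩ := ih u' v (by
        have := hn
        rw [List.length_append] at this
        omega) h'
      refine ⟨L ++ [T1hat], ?_, ?_⟩
      · intro ψ hψ
        rcases List.mem_append.mp hψ with h1 | h1
        · exact hL ψ h1
        · simp at h1; exact Or.inl h1
      · rw [List.prod_append, List.prod_singleton, hprod, rho_T1]
    · subst hv
      have h' : mkP u * mkP v' * (mkP u)⁻¹ * (mkP v')⁻¹ = kappa := by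
        rw [← h, mkP_append]; group
      have hlu : 1 ≤ u.length := List.length_pos_iff.mpr hu0
      obtain ⟨L, hL, hprod⟩ := ih u v' (by
        have := hn
        rw [List.length_append] at this
        omega) h'
      refine ⟨L ++ [T2hat], ?_, ?_⟩
      · intro ψ hψ
        rcases List.mem_append.mp hψ with h1 | h1
        · exact hL ψ h1
        · simp at h1; exact Or.inr h1
      · rw [List.prod_append, List.prod_singleton, hprod, rho_T2]

end CommKappaAux

/-- Every automorphism `φ` of `F₂` sending both generators to positive words and fixing
the commutator `κ` exactly is a finite composition of copies of `T̂₁` and `T̂₂` (the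
identity corresponding to the empty composition; in `Monoid.End F₂` the product of a list
is the composition of its members). -/
theorem automorphism_positive_fixing_kappa_eq_comp_T1hat_T2hat
    (φ : Monoid.End F2) (hbij : Function.Bijective φ)
    (ha : IsPositiveWord (φ a)) (hb : IsPositiveWord (φ b))
    (hκ : φ kappa = kappa) :
    ∃ L : List (Monoid.End F2),
      (∀ ψ ∈ L, ψ = T1hat ∨ ψ = T2hat) ∧ L.prod = φ := by
  classical
  obtain ⟨u, hu⟩ := CommKappaAux.exists_list _ ha
  obtain ⟨v, hv⟩ := CommKappaAux.exists_list _ hb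
  have hφ : φ = CommKappaAux.rho u v := by
    apply FreeGroup.ext_hom
    intro i
    fin_cases i
    · show φ a = CommKappaAux.rho u v a
      rw [CommKappaAux.rho_a, hu]
    · show φ b = CommKappaAux.rho u v b
      rw [CommKappaAux.rho_b, hv]
  have h : CommKappaAux.mkP u * CommKappaAux.mkP v * (CommKappaAux.mkP u)⁻¹ *
      (CommKappaAux.mkP v)⁻¹ = kappa := by
    rw [hu, hv, ← map_inv, ← map_inv, ← map_mul, ← map_mul, ← map_mul]
    exact hκ
  obtain ⟨L, h1, h2⟩ := CommKappaAux.main (u.length + v.length) u v le_rfl h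
  exact ⟨L, h1, h2.trans hφ.symm⟩
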